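/- Let α₀,...,α_{n−1} be complex numbers with |α_k| < 1, ρ_k = √(1 − |α_k|²), and let G_k be the n×n Givens transformation equal to the identity except for the block [[conj(α_k), ρ_k],[ρ_k, −α_k]] in rows and columns {k, k+1} (for 0 ≤ k ≤ n−2). Then the product C = (G_{n−2}⋯G_4 G_2 G_0)·(G_1 G_3 G_5 ⋯) (even-indexed factors multiplied together on the left, odd-indexed factors on the right; even-indexed factors commute among themselves and odd-indexed factors commute among themselves) is five-diagonal: C i j = 0 whenever |i − j| > 2. -/

import Mathlib

open Matrix

/-- The `n×n` Givens transformation with Schur-parameter block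
`[[conj α_k, ρ_k],[ρ_k, -α_k]]` in rows and columns `{k, k+1}`. -/
noncomputable def givensMat (n : ℕ) (α : ℕ → ℂ) (ρ : ℕ → ℝ) (k : ℕ) :
    Matrix (Fin n) (Fin n) ℂ := fun i j =>
  if i.val = k ∧ j.val = k then starRingEnd ℂ (α k)
  else if i.val = k ∧ j.val = k + 1 then ((ρ k : ℝ) : ℂ)
  else if i.val = k + 1 ∧ j.val = k then ((ρ k : ℝ) : ℂ)
  else if i.val = k + 1 ∧ j.val = k + 1 then -α k
  else if i = j then 1 else 0

/-- the CMV product `C = (∏ even-indexed G_k) · (∏ odd-indexed G_k)` of the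
Schur-parameter Givens transformations is five-diagonal: `C i j = 0` for `|i - j| > 2`. -/
theorem stmt14 (n : ℕ) (α : ℕ → ℂ) (ρ : ℕ → ℝ)
    (hα : ∀ k, ‖α k‖ < 1)
    (hρ : ∀ k, ρ k = Real.sqrt (1 - ‖α k‖ ^ 2))
    (C : Matrix (Fin n) (Fin n) ℂ)
    (hC : C = (((List.range (n - 1)).filter (fun k => k % 2 = 0)).map
        (givensMat n α ρ)).prod *
      (((List.range (n - 1)).filter (fun k => k % 2 = 1)).map (givensMat n α ρ)).prod) :
    ∀ i j : Fin n, 2 < ((i.val : ℤ) - (j.val : ℤ)).natAbs → C i j = 0 := by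
  have prod_band : ∀ (f : Fin n → ℕ) (l : List (Matrix (Fin n) (Fin n) ℂ)),
      (∀ A ∈ l, ∀ i j, f i ≠ f j → A i j = 0) →
      ∀ i j, f i ≠ f j → l.prod i j = 0 := by
    intro f l
    induction l with
    | nil =>
      intro _ i j hij
      simp only [List.prod_nil, Matrix.one_apply]
      rw [if_neg (fun e => hij (congrArg f e))]
    | cons A t ih =>
      intro h i j hij
      rw [List.prod_cons, Matrix.mul_apply]
      apply Finset.sum_eq_zero
      intro l _
      by_cases hf : f i = f l
      · rw [ih (fun B hB => h B (List.mem_cons_of_mem A hB)) l j (hf ▸ hij), mul_zero]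
      · rw [h A List.mem_cons_self i l hf, zero_mul]
  have giv_band : ∀ (k : ℕ) (f : Fin n → ℕ), (f ≠ f → True) →
      (∀ i j : Fin n, i.val = k → j.val = k → f i = f j) →
      (∀ i j : Fin n, i.val = k → j.val = k + 1 → f i = f j) →
      (∀ i j : Fin n, i.val = k + 1 → j.val = k → f i = f j) →
      (∀ i j : Fin n, i.val = k + 1 → j.val = k + 1 → f i = f j) →
      ∀ i j : Fin n, f i ≠ f j → givensMat n α ρ k i j = 0 := by
    intro k f _ h1 h2 h3 h4 i j hij
    unfold givensMat
    split_ifs with c1 c2 c3 c4 c5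
    · exact absurd (h1 i j c1.1 c1.2) hij
    · exact absurd (h2 i j c2.1 c2.2) hij
    · exact absurd (h3 i j c3.1 c3.2) hij
    · exact absurd (h4 i j c4.1 c4.2) hij
    · exact absurd (congrArg f c5) hij
    · rfl
  subst hC
  intro i j hij
  rw [Matrix.mul_apply]
  apply Finset.sum_eq_zero
  intro l _
  by_cases hf : i.val / 2 = l.val / 2
  · have : (l.val + 1) / 2 ≠ (j.val + 1) / 2 := by omega
    rw [prod_band (fun i => (i.val + 1) / 2) _ ?_ l j this, mul_zero]
    intro A hA
    simp only [List.mem_map, List.mem_filter, List.mem_range] at hA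
    obtain ⟨k, ⟨_, hk⟩, rfl⟩ := hA
    have hk' : k % 2 = 1 := by simpa using hk
    exact giv_band k _ (fun _ => trivial)
      (fun a b ha hb => by omega) (fun a b ha hb => by omega)
      (fun a b ha hb => by omega) (fun a b ha hb => by omega)
  · rw [prod_band (fun i => i.val / 2) _ ?_ i l hf, zero_mul]
    intro A hA
    simp only [List.mem_map, List.mem_filter, List.mem_range] at hA
    obtain ⟨k, ⟨_, hk⟩, rfl⟩ := hA
    have hk' : k % 2 = 0 := by simpa using hk
    exact giv_band k _ (fun _ => trivial)
      (fun a b ha hb => by omega) (fun a b ha hb => by omega)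
      (fun a b ha hb => by omega) (fun a b ha hb => by omega)
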